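/- Let t > 0 and let γ_t be the Gaussian measure on ℝ with mean 0 and variance t. Then for every s ∈ ℝ and every f ∈ L²(ℝ; ℂ) with ‖f‖_{H^{s+2}} < ∞, the averaged propagator deviation satisfies ∫_ℝ ‖(S_x f) − f‖_{H^s}² dγ_t(x) ≤ t · ‖f‖_{H^{s+2}}² (this is the estimate E‖(S(r,t_n) − I)g‖²_{H^s} ≲ (r − t_n) ‖g‖²_{H^{s+2}} for the random Schrödinger propagator with Brownian increment distributed as γ_t, used throughout the error analyses). -/

import Mathlib

open MeasureTheory Complex Real
open scoped ENNReal NNReal FourierTransform ComplexConjugate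

noncomputable section

/-- `L²(ℝ; ℂ)`. -/
abbrev L2 : Type := Lp ℂ 2 (volume : Measure ℝ)

/-- `F` is the Fourier–Plancherel transform on `L²(ℝ; ℂ)`: a unitary operator that agrees
with the Fourier integral `𝓕 f (ξ) = ∫ e^{−2πixξ} f(x) dx` on `L¹ ∩ L²`. -/
def IsFourierPlancherel (F : L2 ≃ₗᵢ[ℂ] L2) : Prop :=
  ∀ (f : ℝ → ℂ) (_ : Integrable f (volume : Measure ℝ))
    (hf2 : MemLp f 2 (volume : Measure ℝ)),
    (F (hf2.toLp f) : ℝ → ℂ) =ᵐ[volume] 𝓕 f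

/-- Multiplication by a bounded continuous symbol maps `L²` to `L²`. -/
lemma memℒp_mul_symbol (m : ℝ → ℂ) (hm : Continuous m) (hm1 : ∀ ξ, ‖m ξ‖ ≤ 1)
    (g : L2) : MemLp (fun ξ => m ξ * (g : ℝ → ℂ) ξ) 2 (volume : Measure ℝ) := by
  refine ⟨hm.aestronglyMeasurable.mul (Lp.aestronglyMeasurable g), ?_⟩
  refine lt_of_le_of_lt (eLpNorm_mono fun x => ?_) (Lp.eLpNorm_lt_top g)
  rw [norm_mul]
  calc ‖m x‖ * ‖(g : ℝ → ℂ) x‖ ≤ 1 * ‖(g : ℝ → ℂ) x‖ := by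
        gcongr; exact hm1 x
    _ = ‖(g : ℝ → ℂ) x‖ := one_mul _

/-- The Fourier multiplier operator `f ↦ 𝓕⁻¹ (m ⬝ 𝓕 f)` with bounded continuous symbol. -/
def fourierMult (F : L2 ≃ₗᵢ[ℂ] L2) (m : ℝ → ℂ) (hm : Continuous m)
    (hm1 : ∀ ξ, ‖m ξ‖ ≤ 1) (f : L2) : L2 :=
  F.symm ((memℒp_mul_symbol m hm hm1 (F f)).toLp _)

/-- The squared `H^s` norm `‖f‖²_{H^s} = ∫ (1+|ξ|²)^s |𝓕f(ξ)|² dξ ∈ [0,∞]`. -/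
def HsNormSq (F : L2 ≃ₗᵢ[ℂ] L2) (s : ℝ) (f : L2) : ℝ≥0∞ :=
  ∫⁻ ξ : ℝ, ENNReal.ofReal ((1 + |ξ| ^ 2) ^ s) * (‖(F f : ℝ → ℂ) ξ‖₊ : ℝ≥0∞) ^ 2

/-- The `H^s` norm `‖f‖_{H^s} ∈ [0,∞]`. -/
def HsNorm (F : L2 ≃ₗᵢ[ℂ] L2) (s : ℝ) (f : L2) : ℝ≥0∞ :=
  HsNormSq F s f ^ (1 / 2 : ℝ)

lemma Sprop_symbol_cont (τ : ℝ) :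
    Continuous fun ξ : ℝ => Complex.exp (-Complex.I * (τ : ℂ) * (ξ : ℂ) ^ 2) := by
  fun_prop

lemma Sprop_symbol_norm (τ : ℝ) (ξ : ℝ) :
    ‖Complex.exp (-Complex.I * (τ : ℂ) * (ξ : ℂ) ^ 2)‖ ≤ 1 := by
  have h : -Complex.I * (τ : ℂ) * (ξ : ℂ) ^ 2 = ((-(τ * ξ ^ 2) : ℝ) : ℂ) * Complex.I := by
    push_cast; ring
  rw [h, Complex.norm_exp_ofReal_mul_I]

/-- The linear propagator `S_τ = 𝓕⁻¹ e^{−iτ|ξ|²} 𝓕` of `i du + Δu ∘ dW = 0`. -/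
def Sprop (F : L2 ≃ₗᵢ[ℂ] L2) (τ : ℝ) : L2 → L2 :=
  fourierMult F (fun ξ : ℝ => Complex.exp (-Complex.I * (τ : ℂ) * (ξ : ℂ) ^ 2))
    (Sprop_symbol_cont τ) (Sprop_symbol_norm τ)


open ProbabilityTheory in
lemma norm_exp_mul_I_sub_one_le (θ : ℝ) : ‖Complex.exp ((θ:ℂ) * Complex.I) - 1‖ ≤ |θ| := by
  have h1 : Complex.exp ((θ:ℂ) * Complex.I) - 1
      = ((Real.cos θ - 1 : ℝ) : ℂ) + ((Real.sin θ : ℝ) : ℂ) * Complex.I := by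
    rw [Complex.exp_mul_I, ← Complex.ofReal_cos, ← Complex.ofReal_sin]
    push_cast; ring
  have h2 : ‖Complex.exp ((θ:ℂ) * Complex.I) - 1‖ ^ 2 = 2 - 2 * Real.cos θ := by
    rw [h1, Complex.sq_norm, Complex.normSq_add_mul_I]
    have := Real.sin_sq_add_cos_sq θ
    nlinarith
  have hcos : 1 - θ ^ 2 / 2 ≤ Real.cos θ := Real.one_sub_sq_div_two_le_cos
  have hsq : ‖Complex.exp ((θ:ℂ) * Complex.I) - 1‖ ^ 2 ≤ |θ| ^ 2 := by
    rw [h2, _root_.sq_abs]; nlinarith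
  have := Real.sqrt_le_sqrt hsq
  rwa [Real.sqrt_sq (norm_nonneg _), Real.sqrt_sq (abs_nonneg _)] at this

lemma integral_sq_mul_gaussian {b : ℝ} (hb : 0 < b) :
    ∫ x : ℝ, x ^ 2 * Real.exp (-b * x ^ 2) = Real.sqrt (π / b) / (2 * b) := by
  have hint2 : Integrable fun x : ℝ => x ^ 2 * Real.exp (-b * x ^ 2) := by
    have h := integrable_rpow_mul_exp_neg_mul_sq hb (s := 2) (by norm_num)
    have h2 : ∀ x : ℝ, x ^ (2 : ℝ) = x ^ 2 := fun x => by
      rw [show (2 : ℝ) = ((2 : ℕ) : ℝ) by norm_num, Real.rpow_natCast]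
    simpa only [h2] using h
  have hderiv : ∀ x : ℝ, HasDerivAt (fun x : ℝ => x * Real.exp (-b * x ^ 2))
      (Real.exp (-b * x ^ 2) - 2 * b * (x ^ 2 * Real.exp (-b * x ^ 2))) x := by
    intro x
    have h1 : HasDerivAt (fun x : ℝ => -b * x ^ 2) (-b * (2 * x ^ 1)) x :=
      (hasDerivAt_pow 2 x).const_mul (-b)
    have h3 := (hasDerivAt_id x).mul h1.exp
    exact h3.congr_deriv (by simp only [id]; ring)
  have hf' : Integrable fun x : ℝ =>
      Real.exp (-b * x ^ 2) - 2 * b * (x ^ 2 * Real.exp (-b * x ^ 2)) :=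
    (integrable_exp_neg_mul_sq hb).sub (hint2.const_mul _)
  have hzero := integral_eq_zero_of_hasDerivAt_of_integrable hderiv hf'
    (integrable_mul_exp_neg_mul_sq hb)
  rw [integral_sub (integrable_exp_neg_mul_sq hb) (hint2.const_mul _),
    integral_const_mul, integral_gaussian] at hzero
  field_simp at hzero ⊢
  linarith

open ProbabilityTheory in
lemma lintegral_sq_gaussianReal {t : ℝ} (ht : 0 < t) :
    ∫⁻ x : ℝ, ENNReal.ofReal (x ^ 2) ∂(gaussianReal 0 t.toNNReal) ≤ ENNReal.ofReal t := by
  set v : ℝ≥0 := t.toNNReal with hv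
  have hv0 : v ≠ 0 := by simp [hv]; positivity
  have hvt : (v : ℝ) = t := Real.coe_toNNReal t ht.le
  set b : ℝ := (2 * t)⁻¹ with hbdef
  have hb : 0 < b := by positivity
  set c : ℝ := (Real.sqrt (2 * π * t))⁻¹ with hcdef
  have hpdf : ∀ x : ℝ, gaussianPDFReal 0 v x = c * Real.exp (-b * x ^ 2) := by
    intro x
    simp only [gaussianPDFReal, hvt, hcdef]
    congr 1
    rw [hbdef]; ring
  have hint2 : Integrable fun x : ℝ => x ^ 2 * Real.exp (-b * x ^ 2) := by
    have h := integrable_rpow_mul_exp_neg_mul_sq hb (s := 2) (by norm_num)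
    have h2 : ∀ x : ℝ, x ^ (2 : ℝ) = x ^ 2 := fun x => by
      rw [show (2 : ℝ) = ((2 : ℕ) : ℝ) by norm_num, Real.rpow_natCast]
    simpa only [h2] using h
  have hint : Integrable fun x : ℝ => gaussianPDFReal 0 v x * x ^ 2 := by
    simp_rw [hpdf]
    have := (hint2.const_mul c)
    refine this.congr (Filter.EventuallyEq.of_eq ?_)
    funext x; ring
  rw [gaussianReal_of_var_ne_zero 0 hv0,
    lintegral_withDensity_eq_lintegral_mul _ (measurable_gaussianPDF 0 v)
      ((by measurability : Measurable fun x : ℝ => ENNReal.ofReal (x ^ 2)))]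
  have heq : ∀ x : ℝ, (gaussianPDF 0 v * fun x => ENNReal.ofReal (x ^ 2)) x
      = ENNReal.ofReal (gaussianPDFReal 0 v x * x ^ 2) := by
    intro x
    simp only [Pi.mul_apply, gaussianPDF]
    rw [ENNReal.ofReal_mul (gaussianPDFReal_nonneg 0 v x)]
  simp_rw [heq]
  rw [← ofReal_integral_eq_lintegral_ofReal hint
    (Filter.Eventually.of_forall fun x =>
      mul_nonneg (gaussianPDFReal_nonneg 0 v x) (sq_nonneg x))]
  apply ENNReal.ofReal_le_ofReal
  have hval : ∫ x : ℝ, gaussianPDFReal 0 v x * x ^ 2 = c * (Real.sqrt (π / b) / (2 * b)) := by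
    simp_rw [hpdf]
    rw [← integral_sq_mul_gaussian hb, ← integral_const_mul]
    congr 1; funext x; ring
  rw [hval]
  have h1 : π / b = 2 * π * t := by rw [hbdef]; field_simp
  have h2 : (2 * b)⁻¹ = t := by rw [hbdef]; field_simp
  rw [h1, hcdef, div_eq_mul_inv, h2]
  have hs : 0 < Real.sqrt (2 * π * t) := Real.sqrt_pos.mpr (by positivity)
  rw [← mul_assoc, inv_mul_cancel₀ hs.ne', one_mul]

open ProbabilityTheory in
/-- for the centered Gaussian measure `γ_t` with variance `t > 0` and any
`f` with finite `H^{s+2}` norm, the averaged propagator deviation satisfies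
`∫ ‖S_x f − f‖²_{H^s} dγ_t(x) ≤ t ‖f‖²_{H^{s+2}}`. -/
theorem stmt_7 (F : L2 ≃ₗᵢ[ℂ] L2) (hF : IsFourierPlancherel F)
    (t : ℝ) (ht : 0 < t) (s : ℝ) (f : L2) (hf : HsNorm F (s + 2) f < ⊤) :
    ∫⁻ x : ℝ, HsNormSq F s (Sprop F x f - f) ∂(gaussianReal 0 t.toNNReal)
      ≤ ENNReal.ofReal t * HsNormSq F (s + 2) f := by
  set g : ℝ → ℂ := (F f : ℝ → ℂ) with hg
  have key : ∀ x : ℝ, HsNormSq F s (Sprop F x f - f)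
      ≤ ENNReal.ofReal (x ^ 2) * HsNormSq F (s + 2) f := by
    intro x
    set m : ℝ → ℂ := fun ξ => Complex.exp (-Complex.I * (x : ℂ) * (ξ : ℂ) ^ 2) with hm
    have hA : (F (Sprop F x f - f) : ℝ → ℂ) =ᵐ[volume] fun ξ => (m ξ - 1) * g ξ := by
      have h1 : F (Sprop F x f - f)
          = (memℒp_mul_symbol m (Sprop_symbol_cont x) (Sprop_symbol_norm x) (F f)).toLp _
            - F f := by
        rw [map_sub]
        congr 1
        exact F.apply_symm_apply _
      rw [h1]
      filter_upwards [Lp.coeFn_sub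
          ((memℒp_mul_symbol m (Sprop_symbol_cont x) (Sprop_symbol_norm x) (F f)).toLp _) (F f),
        MemLp.coeFn_toLp (memℒp_mul_symbol m (Sprop_symbol_cont x) (Sprop_symbol_norm x) (F f))]
        with ξ h2 h3
      rw [h2, Pi.sub_apply, h3]
      ring
    have hB : HsNormSq F s (Sprop F x f - f)
        = ∫⁻ ξ : ℝ, ENNReal.ofReal ((1 + |ξ| ^ 2) ^ s)
            * (‖(m ξ - 1) * g ξ‖₊ : ℝ≥0∞) ^ 2 := by
      refine lintegral_congr_ae (hA.mono fun ξ h => ?_)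
      simp only [h]
    rw [hB, HsNormSq, ← lintegral_const_mul' _ _ ENNReal.ofReal_ne_top]
    refine lintegral_mono fun ξ => ?_
    have hbase : (0:ℝ) < 1 + |ξ| ^ 2 := by positivity
    have hnorm : ‖m ξ - 1‖ ≤ |x * ξ ^ 2| := by
      have harg : -Complex.I * (x : ℂ) * (ξ : ℂ) ^ 2
          = ((-(x * ξ ^ 2) : ℝ) : ℂ) * Complex.I := by
        push_cast; ring
      have h := norm_exp_mul_I_sub_one_le (-(x * ξ ^ 2))
      rw [abs_neg] at h
      show ‖Complex.exp (-Complex.I * (x : ℂ) * (ξ : ℂ) ^ 2) - 1‖ ≤ |x * ξ ^ 2|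
      rw [harg]
      exact h
    have hsq : ‖m ξ - 1‖ ^ 2 ≤ x ^ 2 * ξ ^ 4 := by
      have h := pow_le_pow_left₀ (norm_nonneg _) hnorm 2
      rw [_root_.sq_abs] at h
      nlinarith
    have hreal : (1 + |ξ| ^ 2) ^ s * (x ^ 2 * ξ ^ 4)
        ≤ x ^ 2 * (1 + |ξ| ^ 2) ^ (s + 2) := by
      rw [Real.rpow_add hbase]
      have h4 : ξ ^ 4 ≤ (1 + |ξ| ^ 2) ^ (2:ℝ) := by
        rw [show (2:ℝ) = ((2:ℕ):ℝ) by norm_num, Real.rpow_natCast]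
        nlinarith [_root_.sq_abs ξ, sq_nonneg ξ, abs_nonneg ξ, sq_nonneg (ξ^2)]
      calc (1 + |ξ| ^ 2) ^ s * (x ^ 2 * ξ ^ 4)
          = x ^ 2 * ((1 + |ξ| ^ 2) ^ s * ξ ^ 4) := by ring
        _ ≤ x ^ 2 * ((1 + |ξ| ^ 2) ^ s * (1 + |ξ| ^ 2) ^ (2:ℝ)) :=
            mul_le_mul_of_nonneg_left
              (mul_le_mul_of_nonneg_left h4 (Real.rpow_nonneg hbase.le s)) (sq_nonneg x)
    calc ENNReal.ofReal ((1 + |ξ| ^ 2) ^ s) * (‖(m ξ - 1) * g ξ‖₊ : ℝ≥0∞) ^ 2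
        = ENNReal.ofReal ((1 + |ξ| ^ 2) ^ s) * (ENNReal.ofReal (‖m ξ - 1‖ ^ 2)
            * (‖g ξ‖₊ : ℝ≥0∞) ^ 2) := by
          rw [nnnorm_mul, ENNReal.coe_mul, mul_pow, ← enorm_eq_nnnorm, ← ofReal_norm,
            ← ENNReal.ofReal_pow (norm_nonneg _)]
      _ ≤ ENNReal.ofReal ((1 + |ξ| ^ 2) ^ s) * (ENNReal.ofReal (x ^ 2 * ξ ^ 4)
            * (‖g ξ‖₊ : ℝ≥0∞) ^ 2) :=
          mul_le_mul_right (mul_le_mul_left (ENNReal.ofReal_le_ofReal hsq) _) _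
      _ = ENNReal.ofReal ((1 + |ξ| ^ 2) ^ s * (x ^ 2 * ξ ^ 4)) * (‖g ξ‖₊ : ℝ≥0∞) ^ 2 := by
          rw [← mul_assoc, ← ENNReal.ofReal_mul (Real.rpow_nonneg hbase.le s)]
      _ ≤ ENNReal.ofReal (x ^ 2 * (1 + |ξ| ^ 2) ^ (s + 2)) * (‖g ξ‖₊ : ℝ≥0∞) ^ 2 :=
          mul_le_mul_left (ENNReal.ofReal_le_ofReal hreal) _
      _ = ENNReal.ofReal (x ^ 2) * (ENNReal.ofReal ((1 + |ξ| ^ 2) ^ (s + 2))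
            * (‖g ξ‖₊ : ℝ≥0∞) ^ 2) := by
          rw [ENNReal.ofReal_mul (sq_nonneg x), mul_assoc]
  calc ∫⁻ x : ℝ, HsNormSq F s (Sprop F x f - f) ∂(gaussianReal 0 t.toNNReal)
      ≤ ∫⁻ x : ℝ, ENNReal.ofReal (x ^ 2) * HsNormSq F (s + 2) f
          ∂(gaussianReal 0 t.toNNReal) := lintegral_mono key
    _ = (∫⁻ x : ℝ, ENNReal.ofReal (x ^ 2) ∂(gaussianReal 0 t.toNNReal))
          * HsNormSq F (s + 2) f := by
        rw [lintegral_mul_const'']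
        measurability
    _ ≤ ENNReal.ofReal t * HsNormSq F (s + 2) f :=
        mul_le_mul_left (lintegral_sq_gaussianReal ht) _


end
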